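/- Let Φ = (G, φ) be a T-gain graph on n vertices with at least one edge. Then for each vertex v_p, d_p^{3/2} / M_4(Φ, p)^{1/2} ≤ E_Φ(v_p), where d_p is the degree of v_p and M_4(Φ, p) = (A(Φ)^4)_{pp} is the sum of gains of closed 4-walks at v_p. -/

import Mathlib

open Matrix BigOperators
open scoped Classical ComplexOrder

/-- A complex unit gain graph (`𝕋`-gain graph) on a finite vertex type `V`. -/
structure TGainGraph (V : Type*) [Fintype V] [DecidableEq V] where
  G : SimpleGraph V
  A : Matrix V V ℂ
  herm : A.IsHermitian
  unitGain : ∀ i j, G.Adj i j → ‖A i j‖ = 1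
  zeroGain : ∀ i j, ¬ G.Adj i j → A i j = 0

namespace TGainGraph

variable {V : Type*} [Fintype V] [DecidableEq V]

/-- The energy of a `𝕋`-gain graph: sum of absolute values of eigenvalues of `A(Φ)`. -/
noncomputable def energy (Φ : TGainGraph V) : ℝ :=
  ∑ i, |Φ.herm.eigenvalues i|

/-- `|A(Φ)| = (A(Φ) A(Φ)ᴴ)^{1/2}`. -/
noncomputable def absMatrix (Φ : TGainGraph V) : Matrix V V ℂ :=
  ((Matrix.posSemidef_self_mul_conjTranspose Φ.A).1.eigenvectorUnitary : Matrix V V ℂ) *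
    diagonal (fun i => ((Real.sqrt ((Matrix.posSemidef_self_mul_conjTranspose Φ.A).1.eigenvalues i) : ℝ) : ℂ)) *
    (star (Matrix.posSemidef_self_mul_conjTranspose Φ.A).1.eigenvectorUnitary : Matrix V V ℂ)

/-- Energy of a vertex: the `(i,i)` entry of `|A(Φ)|`. -/
noncomputable def vertexEnergy (Φ : TGainGraph V) (i : V) : ℝ :=
  (Φ.absMatrix i i).re

/-- Degree of a vertex in the underlying graph. -/
noncomputable def deg (Φ : TGainGraph V) (i : V) : ℕ := Φ.G.degree i

/-- Maximum vertex degree of the underlying graph. -/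
noncomputable def maxDeg (Φ : TGainGraph V) : ℕ := Φ.G.maxDegree

/-- Spectral radius of `A(Φ)`. -/
noncomputable def specRadius (Φ : TGainGraph V) : ℝ :=
  ⨆ i, |Φ.herm.eigenvalues i|

/-- Switching equivalence of two gain graphs on the same vertex set: same
underlying graph, and adjacency matrices conjugate by a diagonal unitary. -/
def SwitchEquiv (Φ₁ Φ₂ : TGainGraph V) : Prop :=
  Φ₁.G = Φ₂.G ∧ ∃ U : Matrix V V ℂ, U.IsDiag ∧ U ∈ Matrix.unitaryGroup V ℂ ∧
    Φ₁.A = U * Φ₂.A * Uᴴ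

/-- `Φ` switches to the all-ones gain on its underlying graph,
i.e. `Φ ∼ (G, 1)` (equivalently, `Φ` is balanced). -/
def SwitchesToOne (Φ : TGainGraph V) : Prop :=
  ∃ U : Matrix V V ℂ, U.IsDiag ∧ U ∈ Matrix.unitaryGroup V ℂ ∧
    Φ.A = U * (Φ.G.adjMatrix ℂ) * Uᴴ

/-- `Φ ∼ (K_{a,b}, 1)`: the underlying graph is (isomorphic to) the complete
bipartite graph `K_{a,b}` via some bijection `e`, and the gains switch to `1`. -/
def SwitchEquivToCompleteBipartite (Φ : TGainGraph V) (a b : ℕ) : Prop :=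
  (∃ e : V ≃ (Fin a ⊕ Fin b), ∀ i j, Φ.G.Adj i j ↔
      (completeBipartiteGraph (Fin a) (Fin b)).Adj (e i) (e j)) ∧
  SwitchesToOne Φ

/-- The gain of a walk: the product of the gains of its edges in order. -/
noncomputable def walkGain (Φ : TGainGraph V) {u v : V} (w : Φ.G.Walk u v) : ℂ :=
  (w.darts.map (fun d => Φ.A d.fst d.snd)).prod

/-- A gain graph is balanced if every cycle has gain `1`. -/
def Balanced (Φ : TGainGraph V) : Prop :=
  ∀ (u : V) (w : Φ.G.Walk u u), w.IsCycle → Φ.walkGain w = 1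

/-- The restriction of a gain graph to a set of vertices. -/
noncomputable def restrict (Φ : TGainGraph V) (s : Set V) : TGainGraph s where
  G := Φ.G.induce s
  A := Φ.A.submatrix (Subtype.val) (Subtype.val)
  herm := Φ.herm.submatrix _
  unitGain := fun i j h => Φ.unitGain i j h
  zeroGain := fun i j h => Φ.zeroGain i j h

/-- The vertex set of the connected component `c`. -/
def componentSet (Φ : TGainGraph V) (c : Φ.G.ConnectedComponent) : Set V :=
  {v | Φ.G.connectedComponentMk v = c}

/-- Every connected component of `Φ` is either an isolated vertex or a balanced
complete bipartite gain graph `(K_{k,k},1)` with a perfect matching. -/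
def ComponentsBalancedCompleteBipartitePM (Φ : TGainGraph V) : Prop :=
  ∀ c : Φ.G.ConnectedComponent,
    (∀ v ∈ Φ.componentSet c, ∀ w, ¬ Φ.G.Adj v w) ∨
    ∃ k : ℕ, 0 < k ∧
      (Φ.restrict (Φ.componentSet c)).SwitchEquivToCompleteBipartite k k

/-- The matching number of a graph. -/
noncomputable def matchingNumber (G : SimpleGraph V) : ℕ :=
  sSup {k | ∃ M : G.Subgraph, M.IsMatching ∧ M.edgeSet.ncard = k}

/-- The vertex cover number of a graph. -/
noncomputable def coverNumber (G : SimpleGraph V) : ℕ :=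
  sInf {k | ∃ s : Finset V, s.card = k ∧ ∀ i j, G.Adj i j → i ∈ s ∨ j ∈ s}

/-- The number of odd cycles of a graph (counted by their edge sets). -/
noncomputable def oddCycleCount (G : SimpleGraph V) : ℕ :=
  Set.ncard {s : Set (Sym2 V) | ∃ (u : V) (w : G.Walk u u),
    w.IsCycle ∧ Odd w.length ∧ s = {e | e ∈ w.edges}}

end TGainGraph


lemma key_real {n : Type*} [Fintype n] (lam u : n → ℝ) (hu : ∀ j, 0 ≤ u j) :
    (∑ j, lam j ^ 2 * u j) ^ ((3:ℝ)/2) / Real.sqrt (∑ j, lam j ^ 4 * u j)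
      ≤ ∑ j, |lam j| * u j := by
  set d := ∑ j, lam j ^ 2 * u j with hd_def
  set E := ∑ j, |lam j| * u j with hE_def
  set M := ∑ j, lam j ^ 4 * u j with hM_def
  set S3 := ∑ j, |lam j| ^ 3 * u j with hS3_def
  have hd : 0 ≤ d := Finset.sum_nonneg fun j _ => mul_nonneg (sq_nonneg _) (hu j)
  have hE : 0 ≤ E := Finset.sum_nonneg fun j _ => mul_nonneg (abs_nonneg _) (hu j)
  have hM : 0 ≤ M := Finset.sum_nonneg fun j _ =>
    mul_nonneg (by positivity) (hu j)
  have hS3 : 0 ≤ S3 := Finset.sum_nonneg fun j _ =>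
    mul_nonneg (by positivity) (hu j)
  have h1 : d ^ 2 ≤ E * S3 := by
    refine Finset.sum_sq_le_sum_mul_sum_of_sq_eq_mul Finset.univ
      (fun j _ => mul_nonneg (abs_nonneg _) (hu j))
      (fun j _ => mul_nonneg (by positivity) (hu j)) (fun j _ => ?_)
    rw [show |lam j| * u j * (|lam j| ^ 3 * u j) = (|lam j| ^ 2) ^ 2 * u j ^ 2 by ring,
      sq_abs]
    ring
  have h2 : S3 ^ 2 ≤ d * M := by
    refine Finset.sum_sq_le_sum_mul_sum_of_sq_eq_mul Finset.univ
      (fun j _ => mul_nonneg (sq_nonneg _) (hu j))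
      (fun j _ => mul_nonneg (by positivity) (hu j)) (fun j _ => ?_)
    rw [show (|lam j| ^ 3 * u j) ^ 2 = (|lam j| ^ 2) ^ 3 * u j ^ 2 by ring, sq_abs]
    ring
  have hkey : d ^ ((3:ℝ)/2) ≤ E * Real.sqrt M := by
    rcases (eq_or_lt_of_le hd).imp Eq.symm id with h0 | hdpos
    · rw [h0, Real.zero_rpow (by norm_num)]
      positivity
    · have h4 : d * d ^ 3 ≤ d * (E ^ 2 * M) := by nlinarith
      have h3 : d ^ 3 ≤ E ^ 2 * M := le_of_mul_le_mul_left h4 hdpos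
      have hrw : d ^ ((3:ℝ)/2) = Real.sqrt (d ^ 3) := by
        rw [Real.sqrt_eq_rpow, ← Real.rpow_natCast d 3, ← Real.rpow_mul hd]
        · norm_num
      rw [hrw]
      calc Real.sqrt (d ^ 3) ≤ Real.sqrt (E ^ 2 * M) := Real.sqrt_le_sqrt h3
        _ = E * Real.sqrt M := by rw [Real.sqrt_mul (sq_nonneg E), Real.sqrt_sq hE]
  rcases (eq_or_lt_of_le (Real.sqrt_nonneg M)).imp Eq.symm id with h0 | hpos
  · rw [h0, div_zero]; exact hE
  · rw [div_le_iff₀ hpos]; exact hkey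

section matrixpart
variable {V : Type*} [Fintype V] [DecidableEq V]

lemma conj_diag_entry_re (U : Matrix V V ℂ) (f : V → ℝ) (p : V) :
    ((U * Matrix.diagonal (fun j => (f j : ℂ)) * star U) p p).re
      = ∑ j, f j * Complex.normSq (U p j) := by
  have : (U * Matrix.diagonal (fun j => (f j : ℂ)) * star U) p p
      = ∑ k, ((f k : ℂ) * (Complex.normSq (U p k) : ℂ)) := by
    rw [Matrix.mul_apply]
    refine Finset.sum_congr rfl fun k _ => ?_
    rw [Matrix.mul_diagonal, Matrix.star_apply]
    rw [mul_comm (U p k) ((f k : ℂ)), mul_assoc, Complex.star_def, Complex.mul_conj]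
  rw [this, Complex.re_sum]
  refine Finset.sum_congr rfl fun k _ => ?_
  push_cast
  simp

lemma conj_diag_mul (U : Matrix V V ℂ) (hU : star U * U = 1) (f g : V → ℝ) :
    (U * Matrix.diagonal (fun j => (f j : ℂ)) * star U)
      * (U * Matrix.diagonal (fun j => (g j : ℂ)) * star U)
    = U * Matrix.diagonal (fun j => ((f j * g j : ℝ) : ℂ)) * star U := by
  calc (U * Matrix.diagonal (fun j => (f j : ℂ)) * star U)
      * (U * Matrix.diagonal (fun j => (g j : ℂ)) * star U)
      = U * (Matrix.diagonal (fun j => (f j : ℂ)) * ((star U * U)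
          * (Matrix.diagonal (fun j => (g j : ℂ)) * star U))) := by
        simp only [Matrix.mul_assoc]
    _ = U * Matrix.diagonal (fun j => ((f j * g j : ℝ) : ℂ)) * star U := by
        rw [hU, one_mul, ← Matrix.mul_assoc (Matrix.diagonal _),
          Matrix.diagonal_mul_diagonal, Matrix.mul_assoc]
        norm_cast

open scoped MatrixOrder in
lemma sqrt_helper (B C : Matrix V V ℂ) (hB : B.PosSemidef) (hC : C.PosSemidef) (h : C ^ 2 = B) :
  ((hB.1.eigenvectorUnitary : Matrix V V ℂ) *
    diagonal (fun i => ((Real.sqrt (hB.1.eigenvalues i) : ℝ) : ℂ)) *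
    (star hB.1.eigenvectorUnitary : Matrix V V ℂ)) = C := by
  have e1 : ((hB.1.eigenvectorUnitary : Matrix V V ℂ) *
    diagonal (fun i => ((Real.sqrt (hB.1.eigenvalues i) : ℝ) : ℂ)) *
    (star hB.1.eigenvectorUnitary : Matrix V V ℂ)) = cfc Real.sqrt B := by
    rw [hB.1.cfc_eq]
    simp [IsHermitian.cfc, Function.comp_def, Unitary.conjStarAlgAut_apply]
  have hB0 : (0 : Matrix V V ℂ) ≤ B := Matrix.nonneg_iff_posSemidef.mpr hB
  have hC0 : (0 : Matrix V V ℂ) ≤ C := Matrix.nonneg_iff_posSemidef.mpr hC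
  rw [e1, ← cfcₙ_eq_cfc, ← CFC.sqrt_eq_real_sqrt B hB0]
  exact CFC.sqrt_unique (by rw [← h, pow_two]) hC0

end matrixpart


open TGainGraph in
/-- `d_p^{3/2} / M₄(Φ,p)^{1/2} ≤ E_Φ(v_p)`, where `M₄(Φ,p) = (A(Φ)⁴)_{pp}`. -/
theorem deg_pow_div_M4_le_vertexEnergy {V : Type*} [Fintype V] [DecidableEq V]
    (Φ : TGainGraph V) (hE : Φ.G.edgeSet.Nonempty) (p : V) :
    (Φ.deg p : ℝ) ^ ((3 : ℝ) / 2) / Real.sqrt (((Φ.A ^ 4) p p).re)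
      ≤ Φ.vertexEnergy p := by
  classical
  have hA := Φ.herm
  set U : Matrix V V ℂ := (hA.eigenvectorUnitary : Matrix V V ℂ) with hU_def
  set lam : V → ℝ := hA.eigenvalues with hlam_def
  have hUstar : star U * U = 1 := by
    simpa [hU_def] using unitary.coe_star_mul_self hA.eigenvectorUnitary
  have hspec : Φ.A = U * Matrix.diagonal (fun j => (lam j : ℂ)) * star U := by
    simpa [Function.comp_def] using hA.spectral_theorem
  have hA2 : Φ.A ^ 2 = U * Matrix.diagonal (fun j => ((lam j ^ 2 : ℝ) : ℂ)) * star U := by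
    rw [pow_two, hspec, conj_diag_mul U hUstar]
    simp [sq]
  have hA4 : Φ.A ^ 4 = U * Matrix.diagonal (fun j => ((lam j ^ 4 : ℝ) : ℂ)) * star U := by
    have h44 : Φ.A ^ 4 = Φ.A ^ 2 * Φ.A ^ 2 := by rw [show (4:ℕ) = 2 + 2 from rfl, pow_add]
    rw [h44, hA2, conj_diag_mul U hUstar]
    ring_nf
  have hC : Matrix.PosSemidef
      (U * Matrix.diagonal (fun j => ((|lam j| : ℝ) : ℂ)) * star U) := by
    have hD : Matrix.PosSemidef (Matrix.diagonal (fun j => ((|lam j| : ℝ) : ℂ))) := by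
      refine Matrix.posSemidef_diagonal_iff.mpr fun i => ?_
      exact_mod_cast Complex.zero_le_real.mpr (abs_nonneg _)
    exact hD.mul_mul_conjTranspose_same U
  have hsq : (U * Matrix.diagonal (fun j => ((|lam j| : ℝ) : ℂ)) * star U) ^ 2
      = Φ.A * Φ.Aᴴ := by
    rw [pow_two, conj_diag_mul U hUstar, hA.eq, ← pow_two, hA2,
      show (fun j => ((|lam j| * |lam j| : ℝ) : ℂ)) = fun j => ((lam j ^ 2 : ℝ) : ℂ) from
        funext fun j => by rw [abs_mul_abs_self, sq]]
  have habs : Φ.absMatrix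
      = U * Matrix.diagonal (fun j => ((|lam j| : ℝ) : ℂ)) * star U := by
    unfold TGainGraph.absMatrix
    exact sqrt_helper _ _ (Matrix.posSemidef_self_mul_conjTranspose Φ.A) hC hsq
  set u : V → ℝ := fun j => Complex.normSq (U p j) with hu_def
  have hEnergy : Φ.vertexEnergy p = ∑ j, |lam j| * u j := by
    rw [TGainGraph.vertexEnergy, habs, conj_diag_entry_re]
  have hM4 : ((Φ.A ^ 4) p p).re = ∑ j, lam j ^ 4 * u j := by
    rw [hA4, conj_diag_entry_re]
  have hdeg : (Φ.deg p : ℝ) = ∑ j, lam j ^ 2 * u j := by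
    rw [← conj_diag_entry_re U (fun j => lam j ^ 2) p, ← hA2]
    have hentry : ((Φ.A ^ 2) p p).re = ∑ j, Complex.normSq (Φ.A p j) := by
      rw [pow_two, Matrix.mul_apply, Complex.re_sum]
      refine Finset.sum_congr rfl fun j _ => ?_
      rw [← hA.apply p j, Complex.star_def, Complex.normSq_conj, mul_comm,
        Complex.mul_conj, Complex.ofReal_re]
    rw [hentry]
    have hterm : ∀ j, Complex.normSq (Φ.A p j)
        = if Φ.G.Adj p j then (1 : ℝ) else 0 := by
      intro j
      by_cases hadj : Φ.G.Adj p j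
      · have := Φ.unitGain p j hadj
        rw [if_pos hadj, Complex.normSq_eq_norm_sq, this, one_pow]
      · rw [if_neg hadj, Φ.zeroGain p j hadj]
        simp
    simp only [hterm]
    rw [Finset.sum_boole]
    congr 1
    rw [TGainGraph.deg, ← SimpleGraph.neighborFinset_eq_filter,
      SimpleGraph.degree]
  rw [hdeg, hM4, hEnergy]
  exact key_real lam u fun j => Complex.normSq_nonneg _
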